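/- Let d ≥ 1, β ∈ ℝ, and let W : Matrix (Fin d × Fin d) (Fin d × Fin d) ℂ be W = 1 + β•G where G (i,j) (k,l) = 1 if i = j and k = l and 0 otherwise. For any X : Matrix (Fin d × Fin d) (Fin d × Fin d) ℂ, the quadratic form Σ over a₁,b₁,a₂,b₂,a₁',b₁',a₂',b₂' : Fin d of conj(X (a₁,a₂) (b₁,b₂)) · W (a₁,b₁) (a₁',b₁') · W (a₂,b₂) (a₂',b₂') · X (a₁',a₂') (b₁',b₂') equals (as a complex number) the real number ‖X‖_F² + β · (‖Tr₁(X)‖_F² + ‖Tr₂(X)‖_F²) + β² · ‖Tr(X)‖², where Tr(X) = Σ_{i,j} X (i,j) (i,j). -/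

import Mathlib

open scoped ComplexConjugate

private lemma sum4_rot {α M : Type*} [Fintype α] [AddCommMonoid M]
    (f : α → α → α → α → M) :
    ∑ a, ∑ b, ∑ c, ∑ e, f a b c e = ∑ b, ∑ c, ∑ e, ∑ a, f a b c e := by
  rw [Finset.sum_comm]
  exact Finset.sum_congr rfl fun b _ => by
    rw [Finset.sum_comm]
    exact Finset.sum_congr rfl fun c _ => Finset.sum_comm ..

private lemma sum4_swap {α M : Type*} [Fintype α] [AddCommMonoid M]
    (f : α → α → α → α → M) :
    ∑ a, ∑ b, ∑ c, ∑ e, f a b c e = ∑ a, ∑ b, ∑ c, ∑ e, f c e a b := by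
  rw [sum4_rot]
  exact sum4_rot (fun b c e a => f a b c e)

theorem two_copy_werner_quadratic_form
    (d : ℕ) (hd : 1 ≤ d) (β : ℝ)
    (G W : Matrix (Fin d × Fin d) (Fin d × Fin d) ℂ)
    (hG : ∀ i j k l : Fin d, G (i, j) (k, l) = if i = j ∧ k = l then 1 else 0)
    (hW : W = 1 + β • G)
    (X : Matrix (Fin d × Fin d) (Fin d × Fin d) ℂ) :
    (∑ a₁ : Fin d, ∑ b₁ : Fin d, ∑ a₂ : Fin d, ∑ b₂ : Fin d,
      ∑ a₁' : Fin d, ∑ b₁' : Fin d, ∑ a₂' : Fin d, ∑ b₂' : Fin d,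
        conj (X (a₁, a₂) (b₁, b₂)) * W (a₁, b₁) (a₁', b₁') * W (a₂, b₂) (a₂', b₂') *
          X (a₁', a₂') (b₁', b₂'))
    = (((∑ p : Fin d × Fin d, ∑ q : Fin d × Fin d, ‖X p q‖ ^ 2)
        + β * ((∑ j : Fin d, ∑ l : Fin d, ‖∑ i : Fin d, X (i, j) (i, l)‖ ^ 2)
              + (∑ i : Fin d, ∑ k : Fin d, ‖∑ j : Fin d, X (i, j) (k, j)‖ ^ 2))
        + β ^ 2 * ‖∑ p : Fin d × Fin d, X p p‖ ^ 2 : ℝ) : ℂ) := by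
  have hnorm : ∀ z : ℂ, ((‖z‖ : ℝ) : ℂ) ^ 2 = conj z * z := fun z => by
    rw [← Complex.ofReal_pow, ← Complex.normSq_eq_conj_mul_self,
      Complex.normSq_eq_norm_sq]
  subst hW
  simp only [Matrix.add_apply, Matrix.one_apply, Matrix.smul_apply, smul_eq_mul, hG,
    Prod.mk.injEq, Complex.ofReal_add, Complex.ofReal_mul, Complex.ofReal_sum,
    Complex.ofReal_pow, hnorm, map_sum, Complex.real_smul]
  simp only [ite_and, mul_add, add_mul, mul_ite, ite_mul, mul_one, one_mul, mul_zero, zero_mul,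
    Finset.sum_add_distrib, Finset.sum_ite_eq, Finset.sum_ite_eq', Finset.mem_univ, if_true,
    Finset.sum_ite_irrel, Finset.sum_const_zero, zero_add, add_zero,
    Finset.mul_sum, Finset.sum_mul]
  simp only [Fintype.sum_prod_type]
  ring_nf
  have h1 : (∑ x : Fin d, ∑ x_1 : Fin d, ∑ x_2 : Fin d, ∑ x_3 : Fin d,
        conj (X (x, x_2) (x_1, x_3)) * X (x, x_2) (x_1, x_3))
      = ∑ x : Fin d, ∑ y : Fin d, ∑ x_1 : Fin d, ∑ y_1 : Fin d,
        conj (X (x, y) (x_1, y_1)) * X (x, y) (x_1, y_1) :=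
    Finset.sum_congr rfl fun x _ => Finset.sum_comm ..
  have h2 : (∑ x : Fin d, ∑ x_1 : Fin d, ∑ x_2 : Fin d, ∑ x_3 : Fin d,
        conj (X (x, x_1) (x, x_2)) * (β : ℂ) * X (x_3, x_1) (x_3, x_2))
      = ∑ x : Fin d, ∑ x_1 : Fin d, ∑ x_2 : Fin d, ∑ x_3 : Fin d,
        (β : ℂ) * conj (X (x_3, x) (x_3, x_1)) * X (x_2, x) (x_2, x_1) :=
    (sum4_rot _).trans (Finset.sum_congr rfl fun _ _ => Finset.sum_congr rfl fun _ _ =>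
      Finset.sum_congr rfl fun _ _ => Finset.sum_congr rfl fun _ _ => by ring)
  have h3 : (∑ x : Fin d, ∑ x_1 : Fin d, ∑ x_2 : Fin d, ∑ x_3 : Fin d,
        conj (X (x, x_2) (x_1, x_2)) * (β : ℂ) * X (x, x_3) (x_1, x_3))
      = ∑ x : Fin d, ∑ x_1 : Fin d, ∑ x_2 : Fin d, ∑ x_3 : Fin d,
        (β : ℂ) * conj (X (x, x_3) (x_1, x_3)) * X (x, x_2) (x_1, x_2) := by
    refine Finset.sum_congr rfl fun _ _ => Finset.sum_congr rfl fun _ _ => ?_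
    rw [Finset.sum_comm]
    exact Finset.sum_congr rfl fun _ _ => Finset.sum_congr rfl fun _ _ => by ring
  have h4 : (∑ x : Fin d, ∑ x_1 : Fin d, ∑ x_2 : Fin d, ∑ x_3 : Fin d,
        conj (X (x, x_1) (x, x_1)) * (β : ℂ) * (β : ℂ) * X (x_2, x_3) (x_2, x_3))
      = ∑ x : Fin d, ∑ x_1 : Fin d, ∑ x_2 : Fin d, ∑ x_3 : Fin d,
        (β : ℂ) ^ 2 * conj (X (x_2, x_3) (x_2, x_3)) * X (x, x_1) (x, x_1) :=
    (sum4_swap _).trans (Finset.sum_congr rfl fun _ _ => Finset.sum_congr rfl fun _ _ =>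
      Finset.sum_congr rfl fun _ _ => Finset.sum_congr rfl fun _ _ => by ring)
  rw [h1, h2]
  refine congrArg₂ (· + ·) (congrArg₂ (· + ·) rfl ?_) ?_
  · exact Finset.sum_congr rfl fun _ _ => Finset.sum_congr rfl fun _ _ => Finset.sum_comm
  · exact sum4_swap (fun a b c e => (β : ℂ) ^ 2 * conj (X (a, b) (a, b)) * X (c, e) (c, e))
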